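/- arXiv:1609.03821 — 3 statements merged into one kernel-verified Lean document; each statement's English description precedes it below -/
import Mathlib

section
/- For every β ∈ (0,1) there exists a constant C > 0 such that for all x ∈ [0,1] and all y ∈ (0,1] one has (((x² + y²)^β − x^{2β})² / y²) · (x² + y²)^{1−β} ≤ C; that is, the function F(x,y) = ((x²+y²)^β − x^{2β})² · y^{−2} · (x²+y²)^{1−β} is bounded on [0,1] × (0,1]. -/
/-- Subadditivity of `rpow` with exponent in `[0,1]` on nonnegative reals. -/
lemma rpow_add_le_add_rpow_real {a b p : ℝ} (ha : 0 ≤ a) (hb : 0 ≤ b)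
    (hp : 0 ≤ p) (hp1 : p ≤ 1) : (a + b) ^ p ≤ a ^ p + b ^ p := by
  have h := NNReal.rpow_add_le_add_rpow a.toNNReal b.toNNReal hp hp1
  have h' := NNReal.coe_le_coe.2 h
  rw [← Real.toNNReal_add ha hb] at h'
  simpa [NNReal.coe_rpow, Real.coe_toNNReal _ ha, Real.coe_toNNReal _ hb,
    Real.coe_toNNReal _ (add_nonneg ha hb)] using h'

/-- Bernoulli-type bound: `(t+s)^β ≤ t^β + β * s * t^(β-1)` for `t > 0`, `s ≥ 0`. -/
lemma rpow_add_le_bernoulli {t s β : ℝ} (ht : 0 < t) (hs : 0 ≤ s)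
    (hβ0 : 0 ≤ β) (hβ1 : β ≤ 1) : (t + s) ^ β ≤ t ^ β + β * s * t ^ (β - 1) := by
  have hst : (0:ℝ) ≤ s / t := div_nonneg hs ht.le
  have hb := rpow_one_add_le_one_add_mul_self (by linarith : (-1:ℝ) ≤ s / t) hβ0 hβ1
  have he : t + s = t * (1 + s / t) := by field_simp
  calc (t + s) ^ β = t ^ β * (1 + s / t) ^ β := by
        rw [he, Real.mul_rpow ht.le (by linarith)]
    _ ≤ t ^ β * (1 + β * (s / t)) := by
        apply mul_le_mul_of_nonneg_left hb (Real.rpow_nonneg ht.le β)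
    _ = t ^ β + β * s * (t ^ β / t) := by field_simp
    _ = t ^ β + β * s * t ^ (β - 1) := by
        rw [Real.rpow_sub ht, Real.rpow_one]

/-- For every `β ∈ (0,1)` there is `C > 0` such that
`(((x² + y²)^β − x^{2β})² / y²) · (x² + y²)^{1−β} ≤ C`
for all `x ∈ [0,1]`, `y ∈ (0,1]` (real powers via `Real.rpow`). -/
theorem stmt0 (β : ℝ) (hβ0 : 0 < β) (hβ1 : β < 1) :
    ∃ C : ℝ, 0 < C ∧ ∀ x y : ℝ, x ∈ Set.Icc (0:ℝ) 1 → y ∈ Set.Ioc (0:ℝ) 1 →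
      (((x ^ 2 + y ^ 2) ^ β - x ^ (2 * β)) ^ 2 / y ^ 2) *
        (x ^ 2 + y ^ 2) ^ (1 - β) ≤ C := by
  refine ⟨2, by norm_num, fun x y hx hy => ?_⟩
  obtain ⟨hx0, hx1⟩ := hx
  obtain ⟨hy0, hy1⟩ := hy
  set t : ℝ := x ^ 2 with htdef
  set s : ℝ := y ^ 2 with hsdef
  have ht0 : 0 ≤ t := sq_nonneg x
  have hs0 : 0 < s := by positivity
  have ht1 : t ≤ 1 := by nlinarith
  have hs1 : s ≤ 1 := by nlinarith
  have hx2 : x ^ (2 * β) = t ^ β := by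
    rw [show (2:ℝ) * β = ((2:ℕ):ℝ) * β by norm_num, Real.rpow_natCast_mul hx0]
  rw [hx2]
  set D : ℝ := (t + s) ^ β - t ^ β with hDdef
  have hD0 : 0 ≤ D := by
    have := Real.rpow_le_rpow ht0 (by linarith : t ≤ t + s) hβ0.le
    simp [hDdef]; linarith
  have hP0 : (0:ℝ) ≤ (t + s) ^ (1 - β) := Real.rpow_nonneg (by linarith) _
  rcases le_total t s with hts | hts
  · -- case t ≤ s : use D ≤ s^β
    have hDle : D ≤ s ^ β := by
      have := rpow_add_le_add_rpow_real ht0 hs0.le hβ0.le hβ1.le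
      simp only [hDdef]; linarith
    have hPle : (t + s) ^ (1 - β) ≤ (2 * s) ^ (1 - β) :=
      Real.rpow_le_rpow (by linarith) (by linarith) (by linarith)
    calc D ^ 2 / s * (t + s) ^ (1 - β)
        ≤ (s ^ β) ^ 2 / s * (2 * s) ^ (1 - β) := by gcongr
      _ = 2 ^ (1 - β) * ((s ^ β) ^ 2 * s ^ (1 - β) / s) := by
          rw [Real.mul_rpow (by norm_num) hs0.le]; ring
      _ = 2 ^ (1 - β) * s ^ β := by
          rw [sq, mul_assoc, ← Real.rpow_add hs0, show β + (1 - β) = 1 by ring,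
            Real.rpow_one, mul_div_assoc, div_self hs0.ne', mul_one]
      _ ≤ 2 ^ (1:ℝ) * 1 := by
          apply mul_le_mul (Real.rpow_le_rpow_of_exponent_le one_le_two (by linarith))
            (Real.rpow_le_one hs0.le hs1 hβ0.le) (Real.rpow_nonneg hs0.le _) (by norm_num)
      _ = 2 := by norm_num
  · -- case s ≤ t : use Bernoulli
    have ht0' : 0 < t := lt_of_lt_of_le hs0 hts
    have hDle : D ≤ β * s * t ^ (β - 1) := by
      have := rpow_add_le_bernoulli ht0' hs0.le hβ0.le hβ1.le
      simp only [hDdef]; linarith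
    have hM0 : 0 ≤ β * s * t ^ (β - 1) := by positivity
    have hPle : (t + s) ^ (1 - β) ≤ (2 * t) ^ (1 - β) :=
      Real.rpow_le_rpow (by linarith) (by linarith) (by linarith)
    calc D ^ 2 / s * (t + s) ^ (1 - β)
        ≤ (β * s * t ^ (β - 1)) ^ 2 / s * (2 * t) ^ (1 - β) := by gcongr
      _ = 2 ^ (1 - β) * (β ^ 2 * s * ((t ^ (β - 1)) ^ 2 * t ^ (1 - β)) * (s / s)) := by
          rw [Real.mul_rpow (by norm_num) ht0'.le]; ring
      _ = 2 ^ (1 - β) * (β ^ 2 * (s * t ^ (β - 1))) := by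
          rw [sq (t ^ (β - 1)), mul_assoc (t ^ (β-1)), ← Real.rpow_add ht0',
            show β - 1 + (1 - β) = 0 by ring, Real.rpow_zero, mul_one,
            div_self hs0.ne', mul_one]; ring
      _ ≤ 2 ^ (1:ℝ) * (1 * (t * t ^ (β - 1))) := by
          have h1 : (2:ℝ) ^ (1 - β) ≤ 2 ^ (1:ℝ) :=
            Real.rpow_le_rpow_of_exponent_le one_le_two (by linarith)
          have h2 : β ^ 2 ≤ 1 := by nlinarith
          have h3 : s * t ^ (β - 1) ≤ t * t ^ (β - 1) := by
            apply mul_le_mul_of_nonneg_right hts (Real.rpow_nonneg ht0'.le _)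
          have hpos : (0:ℝ) ≤ s * t ^ (β - 1) := by positivity
          have : β ^ 2 * (s * t ^ (β - 1)) ≤ 1 * (t * t ^ (β - 1)) := by
            apply mul_le_mul h2 h3 hpos (by norm_num)
          apply mul_le_mul h1 this (by positivity) (by positivity)
      _ = 2 * t ^ β := by
          rw [Real.rpow_one, ← Real.rpow_one_add' ht0'.le (by simp [hβ0.ne'] : 1 + (β-1) ≠ 0)]
          ring_nf
      _ ≤ 2 := by
          have := Real.rpow_le_one ht0'.le ht1 hβ0.le
          linarith
end

section
/- For every ρ ∈ (0,1) there exists a constant C > 0 such that for all real numbers a ≥ 0 and b > 0 one has ((a² + b²)^ρ − a^{2ρ})² ≤ C · b² · (a² + b²)^{2ρ−1}. -/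
/-- For every `ρ ∈ (0,1)` there is `C > 0` such that
`((a² + b²)^ρ − a^{2ρ})² ≤ C · b² · (a² + b²)^{2ρ−1}` for all `a ≥ 0`, `b > 0`
(real powers via `Real.rpow`). -/
theorem stmt1 (ρ : ℝ) (hρ0 : 0 < ρ) (hρ1 : ρ < 1) :
    ∃ C : ℝ, 0 < C ∧ ∀ a b : ℝ, 0 ≤ a → 0 < b →
      ((a ^ 2 + b ^ 2) ^ ρ - a ^ (2 * ρ)) ^ 2 ≤
        C * b ^ 2 * (a ^ 2 + b ^ 2) ^ (2 * ρ - 1) := by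
  refine ⟨1, one_pos, fun a b ha hb => ?_⟩
  set x := a ^ 2 with hxdef
  set y := b ^ 2 with hydef
  set s := x + y with hsdef
  have hx : 0 ≤ x := sq_nonneg a
  have hy : 0 < y := pow_pos hb 2
  have hs : 0 < s := by positivity
  have hxs : x ≤ s := le_add_of_nonneg_right hy.le
  have hys : y ≤ s := le_add_of_nonneg_left hx
  have h2ρ : a ^ (2 * ρ) = x ^ ρ := by
    rw [Real.rpow_mul ha, hxdef]
    norm_num [Real.rpow_natCast a 2]
  rw [h2ρ]
  -- key: x * s^(ρ-1) ≤ x^ρ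
  have key : x * s ^ (ρ - 1) ≤ x ^ ρ := by
    rcases eq_or_lt_of_le hx with h | hx0
    · rw [← h, Real.zero_rpow hρ0.ne', zero_mul]
    · have h1 : s ^ (ρ - 1) ≤ x ^ (ρ - 1) :=
        Real.rpow_le_rpow_of_nonpos hx0 hxs (by linarith)
      calc x * s ^ (ρ - 1) ≤ x * x ^ (ρ - 1) := by
            exact mul_le_mul_of_nonneg_left h1 hx
        _ = x ^ (1 : ℝ) * x ^ (ρ - 1) := by rw [Real.rpow_one]
        _ = x ^ ρ := by rw [← Real.rpow_add hx0]; ring_nf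
  have hAnn : 0 ≤ s ^ ρ - x ^ ρ :=
    sub_nonneg.2 (Real.rpow_le_rpow hx hxs hρ0.le)
  have hA : s ^ ρ - x ^ ρ ≤ y * s ^ (ρ - 1) := by
    have hsρ : s ^ ρ = s * s ^ (ρ - 1) := by
      nth_rewrite 1 [show ρ = 1 + (ρ - 1) by ring]
      rw [Real.rpow_add hs, Real.rpow_one]
    have : y * s ^ (ρ - 1) = s ^ ρ - x * s ^ (ρ - 1) := by
      rw [hsρ, hsdef]; ring
    rw [this]
    linarith [key]
  have hB : y * s ^ (ρ - 1) ≤ s ^ ρ := by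
    calc y * s ^ (ρ - 1) ≤ s * s ^ (ρ - 1) :=
          mul_le_mul_of_nonneg_right hys (Real.rpow_nonneg hs.le _)
      _ = s ^ ρ := by
          nth_rewrite 2 [show ρ = 1 + (ρ - 1) by ring]
          rw [Real.rpow_add hs, Real.rpow_one]
  calc (s ^ ρ - x ^ ρ) ^ 2 = (s ^ ρ - x ^ ρ) * (s ^ ρ - x ^ ρ) := sq _
    _ ≤ (y * s ^ (ρ - 1)) * (s ^ ρ) := by
        apply mul_le_mul hA (le_trans hA hB) hAnn
        positivity
    _ = y * (s ^ (ρ - 1) * s ^ ρ) := by ring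
    _ = 1 * y * s ^ (2 * ρ - 1) := by
        rw [← Real.rpow_add hs, show ρ - 1 + ρ = 2 * ρ - 1 by ring]; ring
end

section
/- For every β ∈ (0,1), every ε ≥ 0 and every t ∈ [0,1], the function r ↦ ((ε² + r)^β − ε^{2β})/r is nonnegative on (0, t], is integrable on (0, t], and satisfies 0 ≤ (1/β) ∫₀^t ((ε² + r)^β − ε^{2β})/r dr ≤ t^β/β² ≤ 1/β². In particular the bound is uniform in ε. -/
open MeasureTheory Set

lemma rpow_add_le_add_rpow' (a b p : ℝ) (ha : 0 ≤ a) (hb : 0 ≤ b) (hp : 0 ≤ p)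
    (hp1 : p ≤ 1) : (a + b) ^ p ≤ a ^ p + b ^ p := by
  have h := NNReal.rpow_add_le_add_rpow a.toNNReal b.toNNReal hp hp1
  have := NNReal.coe_le_coe.mpr h
  push_cast [NNReal.coe_rpow, Real.coe_toNNReal _ ha, Real.coe_toNNReal _ hb] at this
  exact this

/-- For `β ∈ (0,1)`, `ε ≥ 0`, `t ∈ [0,1]`, the function
`r ↦ ((ε² + r)^β − ε^{2β})/r` is nonnegative and integrable on `(0,t]`, and
`0 ≤ (1/β) ∫₀^t ((ε² + r)^β − ε^{2β})/r dr ≤ t^β/β² ≤ 1/β²`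
(real powers via `Real.rpow`). -/
theorem stmt2 (β ε t : ℝ) (hβ0 : 0 < β) (hβ1 : β < 1) (hε : 0 ≤ ε)
    (ht : t ∈ Set.Icc (0:ℝ) 1) :
    (∀ r ∈ Set.Ioc (0:ℝ) t, 0 ≤ ((ε ^ 2 + r) ^ β - ε ^ (2 * β)) / r) ∧
    MeasureTheory.IntegrableOn
      (fun r : ℝ => ((ε ^ 2 + r) ^ β - ε ^ (2 * β)) / r) (Set.Ioc 0 t) ∧
    0 ≤ (1 / β) * ∫ r in Set.Ioc (0:ℝ) t, ((ε ^ 2 + r) ^ β - ε ^ (2 * β)) / r ∧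
    (1 / β) * (∫ r in Set.Ioc (0:ℝ) t, ((ε ^ 2 + r) ^ β - ε ^ (2 * β)) / r) ≤
      t ^ β / β ^ 2 ∧
    t ^ β / β ^ 2 ≤ 1 / β ^ 2 := by
  have hε2 : (0:ℝ) ≤ ε ^ 2 := sq_nonneg ε
  have hkey : ε ^ (2 * β) = (ε ^ 2) ^ β := by
    rw [← Real.rpow_natCast ε 2, ← Real.rpow_mul hε]
    norm_num
  -- pointwise nonnegativity
  have hnn : ∀ r ∈ Set.Ioc (0:ℝ) t, 0 ≤ ((ε ^ 2 + r) ^ β - ε ^ (2 * β)) / r := by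
    intro r hr
    apply div_nonneg _ hr.1.le
    rw [hkey, sub_nonneg]
    exact Real.rpow_le_rpow hε2 (by linarith [hr.1]) hβ0.le
  -- pointwise upper bound by r^(β-1)
  have hub : ∀ r ∈ Set.Ioc (0:ℝ) t,
      ((ε ^ 2 + r) ^ β - ε ^ (2 * β)) / r ≤ r ^ (β - 1) := by
    intro r hr
    have hr0 := hr.1
    have h1 : (ε ^ 2 + r) ^ β - ε ^ (2 * β) ≤ r ^ β := by
      have := rpow_add_le_add_rpow' (ε ^ 2) r β hε2 hr0.le hβ0.le hβ1.le
      rw [hkey]; linarith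
    calc ((ε ^ 2 + r) ^ β - ε ^ (2 * β)) / r ≤ r ^ β / r := by gcongr
      _ = r ^ (β - 1) := by
          rw [Real.rpow_sub hr0, Real.rpow_one]
  -- integrability of r^(β-1) on Ioc 0 t
  have hgint : IntegrableOn (fun r : ℝ => r ^ (β - 1)) (Set.Ioc 0 t) := by
    rcases le_or_gt t 0 with h | h
    · rw [Set.Ioc_eq_empty (by exact fun h' => absurd h (not_le.mpr h'))]
      exact integrableOn_empty
    · exact (intervalIntegral.intervalIntegrable_rpow' (by linarith) (a := 0) (b := t)).1
  -- measurability
  have hmeas : AEStronglyMeasurable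
      (fun r : ℝ => ((ε ^ 2 + r) ^ β - ε ^ (2 * β)) / r)
      (volume.restrict (Set.Ioc 0 t)) := by
    apply Measurable.aestronglyMeasurable
    have hc : Continuous fun r : ℝ => (ε ^ 2 + r) ^ β :=
      continuous_iff_continuousAt.mpr fun x =>
        (Real.continuousAt_rpow_const _ β (Or.inr hβ0.le)).comp
          (continuous_const.add continuous_id).continuousAt
    exact (hc.measurable.sub measurable_const).div measurable_id
  have hint : IntegrableOn
      (fun r : ℝ => ((ε ^ 2 + r) ^ β - ε ^ (2 * β)) / r) (Set.Ioc 0 t) := by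
    refine hgint.mono' hmeas ?_
    filter_upwards [ae_restrict_mem measurableSet_Ioc] with r hr
    rw [Real.norm_eq_abs, abs_of_nonneg (hnn r hr)]
    exact hub r hr
  -- integral nonneg
  have hInn : 0 ≤ ∫ r in Set.Ioc (0:ℝ) t, ((ε ^ 2 + r) ^ β - ε ^ (2 * β)) / r :=
    setIntegral_nonneg measurableSet_Ioc hnn
  -- integral of bound
  have hg : ∫ r in Set.Ioc (0:ℝ) t, r ^ (β - 1) = t ^ β / β := by
    rcases eq_or_lt_of_le ht.1 with h | h
    · rw [← h]
      simp [Real.zero_rpow hβ0.ne']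
    · rw [← intervalIntegral.integral_of_le h.le,
        integral_rpow (Or.inl (by linarith))]
      simp [Real.zero_rpow hβ0.ne', sub_add_cancel]
  have hI : (∫ r in Set.Ioc (0:ℝ) t, ((ε ^ 2 + r) ^ β - ε ^ (2 * β)) / r) ≤ t ^ β / β := by
    rw [← hg]
    exact setIntegral_mono_on hint hgint measurableSet_Ioc hub
  refine ⟨hnn, hint, by positivity, ?_, ?_⟩
  · have : (1 / β) * (∫ r in Set.Ioc (0:ℝ) t, ((ε ^ 2 + r) ^ β - ε ^ (2 * β)) / r)
        ≤ (1 / β) * (t ^ β / β) :=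
      mul_le_mul_of_nonneg_left hI (by positivity)
    calc _ ≤ (1 / β) * (t ^ β / β) := this
      _ = t ^ β / β ^ 2 := by ring
  · have h1 : t ^ β ≤ 1 := Real.rpow_le_one ht.1 ht.2 hβ0.le
    gcongr
end
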